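/- Let M satisfy the Reset Cliff assumption and let (P̂_h)_{h=1}^H be admissible estimates. If π^{AIL} is any global minimizer of the VAIL objective L(π) = Σ_{h=1}^H Σ_{(s,a)} |P^π_h(s,a) − P̂_h(s,a)|, then π^{AIL}_h(a¹|s) = 1 for every s ∈ S^G and every h ∈ {1,…,H−1}; i.e., any globally optimal solution exactly recovers the expert action on all good states in the first H−1 time steps. -/

import Mathlib

open Finset

/-- State distribution `d^π_h` of a policy `π` in an episodic tabular MDP
(time steps are 0-indexed: `stateDist ρ P π 0 = ρ`). -/
noncomputable def stateDist {S A : Type*} [Fintype S] [Fintype A] (ρ : S → ℝ)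
    (P : ℕ → S → A → S → ℝ) (π : ℕ → S → A → ℝ) : ℕ → S → ℝ
  | 0 => ρ
  | h + 1 => fun s' => ∑ s : S, ∑ a : A, stateDist ρ P π h s * π h s a * P h s a s'

/-- State-action distribution `P^π_h(s,a) = d^π_h(s) π_h(a|s)`. -/
noncomputable def saDist {S A : Type*} [Fintype S] [Fintype A] (ρ : S → ℝ)
    (P : ℕ → S → A → S → ℝ) (π : ℕ → S → A → ℝ) (h : ℕ) (s : S) (a : A) : ℝ :=
  stateDist ρ P π h s * π h s a

/-- Policy value `V^π = Σ_{h<H} Σ_{(s,a)} P^π_h(s,a) r_h(s,a)`. -/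
noncomputable def policyValue {S A : Type*} [Fintype S] [Fintype A] (ρ : S → ℝ)
    (P : ℕ → S → A → S → ℝ) (π : ℕ → S → A → ℝ) (r : ℕ → S → A → ℝ) (H : ℕ) : ℝ :=
  ∑ h ∈ Finset.range H, ∑ s : S, ∑ a : A, saDist ρ P π h s a * r h s a

/-- `π` is a (Markovian, non-stationary) policy. -/
def IsPolicy {S A : Type*} [Fintype A] (π : ℕ → S → A → ℝ) : Prop :=
  ∀ h s, (∀ a, 0 ≤ π h s a) ∧ (∑ a : A, π h s a) = 1

/-- `P` is a transition function. -/
def IsTransition {S A : Type*} [Fintype S] (P : ℕ → S → A → S → ℝ) : Prop :=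
  ∀ h s a, (∀ s', 0 ≤ P h s a s') ∧ (∑ s' : S, P h s a s') = 1

/-- `ρ` is an initial state distribution. -/
def IsInitDist {S : Type*} [Fintype S] (ρ : S → ℝ) : Prop :=
  (∀ s, 0 ≤ ρ s) ∧ (∑ s : S, ρ s) = 1

/-- Rewards take values in `[0,1]`. -/
def IsReward {S A : Type*} (r : ℕ → S → A → ℝ) : Prop :=
  ∀ h s a, 0 ≤ r h s a ∧ r h s a ≤ 1

/-- The VAIL state-action distribution matching objective
`L(π) = Σ_{h<H} Σ_{(s,a)} |P^π_h(s,a) − Q_h(s,a)|`. -/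
noncomputable def vailLoss {S A : Type*} [Fintype S] [Fintype A] (ρ : S → ℝ)
    (P : ℕ → S → A → S → ℝ) (π : ℕ → S → A → ℝ) (Q : ℕ → S → A → ℝ) (H : ℕ) : ℝ :=
  ∑ h ∈ Finset.range H, ∑ s : S, ∑ a : A, |saDist ρ P π h s a - Q h s a|

/-- The Reset Cliff assumption: good states `G` (with bad states `Gᶜ`), expert action `a1`. -/
def ResetCliff {S A : Type*} [Fintype S] [Fintype A] [DecidableEq S]
    (ρ : S → ℝ) (P : ℕ → S → A → S → ℝ) (r : ℕ → S → A → ℝ)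
    (G : Finset S) (a1 : A) : Prop :=
  G.Nonempty ∧
  (∀ (h : ℕ), ∀ s ∈ G, r h s a1 = 1) ∧
  (∀ (h : ℕ) (s : S) (a : A), (s ∉ G ∨ a ≠ a1) → r h s a = 0) ∧
  (∀ (h : ℕ), ∀ s ∈ G, (∑ s' ∈ G, P h s a1 s') = 1) ∧
  (∀ (h : ℕ), ∀ s ∈ G, ∀ s' ∈ G, 0 < P h s a1 s') ∧
  (∀ (h : ℕ), ∀ s ∈ G, ∀ a : A, a ≠ a1 → (∑ s' ∈ Gᶜ, P h s a s') = 1) ∧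
  (∀ (h : ℕ), ∀ s ∉ G, ∀ a : A, (∑ s' ∈ Gᶜ, P h s a s') = 1) ∧
  (∀ s ∈ G, 0 < ρ s) ∧
  (∀ s ∉ G, ρ s = 0)

/-- Admissible estimates for the expert state-action distributions on a Reset Cliff instance. -/
def AdmissibleEst {S A : Type*} [Fintype S] [DecidableEq S]
    (G : Finset S) (a1 : A) (Q : ℕ → S → A → ℝ) (H : ℕ) : Prop :=
  ∀ h < H, (∀ s a, 0 ≤ Q h s a) ∧
    (∀ (s : S) (a : A), (s ∉ G ∨ a ≠ a1) → Q h s a = 0) ∧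
    (∑ s ∈ G, Q h s a1) = 1

section Aux
variable {S A : Type*} [Fintype S] [Fintype A]
variable {ρ : S → ℝ} {P : ℕ → S → A → S → ℝ} {π π' : ℕ → S → A → ℝ}

lemma stateDist_succ (ρ : S → ℝ) (P : ℕ → S → A → S → ℝ) (π : ℕ → S → A → ℝ) (h : ℕ) (s' : S) :
    stateDist ρ P π (h+1) s' = ∑ s : S, ∑ a : A, stateDist ρ P π h s * π h s a * P h s a s' := rfl

lemma stateDist_nonneg (hρ : ∀ s, 0 ≤ ρ s) (hP : ∀ h s a s', 0 ≤ P h s a s')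
    (hπ : ∀ h s a, 0 ≤ π h s a) : ∀ h s, 0 ≤ stateDist ρ P π h s := by
  intro h
  induction h with
  | zero => exact hρ
  | succ k ih =>
    intro s'
    exact Finset.sum_nonneg fun s _ => Finset.sum_nonneg fun a _ =>
      mul_nonneg (mul_nonneg (ih s) (hπ k s a)) (hP k s a s')

lemma stateDist_sum_one (hρ : ∑ s : S, ρ s = 1) (hP : ∀ h s a, ∑ s' : S, P h s a s' = 1)
    (hπ : ∀ h s, ∑ a : A, π h s a = 1) : ∀ h, ∑ s : S, stateDist ρ P π h s = 1 := by
  intro h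
  induction h with
  | zero => exact hρ
  | succ k ih =>
    have : ∑ s' : S, stateDist ρ P π (k+1) s'
        = ∑ s : S, ∑ a : A, stateDist ρ P π k s * π k s a * (∑ s' : S, P k s a s') := by
      simp_rw [stateDist_succ, Finset.mul_sum]
      rw [Finset.sum_comm]
      refine Finset.sum_congr rfl fun s _ => Finset.sum_comm
    rw [this]
    simp_rw [hP, mul_one, ← Finset.mul_sum, hπ, mul_one, ih]

lemma stateDist_congr {k : ℕ} (hk : ∀ k' s a, k' < k → π k' s a = π' k' s a) :
    stateDist ρ P π k = stateDist ρ P π' k := by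
  induction k with
  | zero => rfl
  | succ n ih =>
    funext s'
    rw [stateDist_succ, stateDist_succ]
    refine Finset.sum_congr rfl fun s _ => Finset.sum_congr rfl fun a _ => ?_
    rw [ih (fun k' s a hk' => hk k' s a (hk'.trans (Nat.lt_succ_self n))),
      hk n s a (Nat.lt_succ_self n)]

end Aux

lemma abs_le_aux {x y q : ℝ} (h : x ≤ y) : |y - q| ≤ |x - q| + (y - x) := by
  have := abs_sub_abs_le_abs_sub (y - q) (x - q)
  have h2 : |y - q - (x - q)| = y - x := by
    rw [show y - q - (x - q) = y - x by ring, abs_of_nonneg (by linarith)]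
  linarith

lemma abs_lt_aux {x y q : ℝ} (h1 : x < q) (h2 : x < y) : |y - q| < |x - q| + (y - x) := by
  rw [abs_of_neg (by linarith : x - q < 0)]
  rcases abs_cases (y - q) with ⟨he, _⟩ | ⟨he, _⟩ <;> rw [he] <;> linarith

section
variable {S A : Type*} [Fintype S] [Fintype A] [DecidableEq S]

lemma loss_decomp (G : Finset S) (a1 : A) (e : S → ℝ) (he : ∀ s, 0 ≤ e s)
    (μ : S → A → ℝ) (hμ0 : ∀ s a, 0 ≤ μ s a) (hμ1 : ∀ s, ∑ a : A, μ s a = 1)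
    (q : S → A → ℝ) (hq : ∀ (s : S) (a : A), s ∉ G ∨ a ≠ a1 → q s a = 0) :
    ∑ s : S, ∑ a : A, |e s * μ s a - q s a|
      = ∑ s ∈ G, |e s * μ s a1 - q s a1| + (∑ s ∈ G, (e s - e s * μ s a1)) + ∑ s ∈ Gᶜ, e s := by
  classical
  rw [← Finset.sum_add_sum_compl G (fun s => ∑ a : A, |e s * μ s a - q s a|)]
  have hGc : ∀ s ∈ Gᶜ, ∑ a : A, |e s * μ s a - q s a| = e s := by
    intro s hs
    rw [Finset.mem_compl] at hs
    have : ∀ a : A, |e s * μ s a - q s a| = e s * μ s a := by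
      intro a
      rw [hq s a (Or.inl hs), sub_zero, abs_of_nonneg (mul_nonneg (he s) (hμ0 s a))]
    simp_rw [this, ← Finset.mul_sum, hμ1, mul_one]
  have hGg : ∀ s ∈ G, ∑ a : A, |e s * μ s a - q s a|
      = |e s * μ s a1 - q s a1| + (e s - e s * μ s a1) := by
    intro s hs
    rw [← Finset.add_sum_erase _ _ (Finset.mem_univ a1)]
    congr 1
    have : ∀ a ∈ Finset.univ.erase a1, |e s * μ s a - q s a| = e s * μ s a := by
      intro a ha
      rw [hq s a (Or.inr (Finset.ne_of_mem_erase ha)), sub_zero,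
        abs_of_nonneg (mul_nonneg (he s) (hμ0 s a))]
    rw [Finset.sum_congr rfl this]
    have h2 : e s * μ s a1 + ∑ a ∈ Finset.univ.erase a1, e s * μ s a = ∑ a : A, e s * μ s a :=
      Finset.add_sum_erase _ (fun a => e s * μ s a) (Finset.mem_univ a1)
    have h1 : ∑ a : A, e s * μ s a = e s := by rw [← Finset.mul_sum, hμ1, mul_one]
    linarith
  rw [Finset.sum_congr rfl hGc, Finset.sum_congr rfl hGg, Finset.sum_add_distrib]

end

/-- on any Reset Cliff instance with admissible estimates, any global minimizer
`πAIL` of the VAIL objective exactly recovers the expert action on all good states in the first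
`H − 1` time steps (0-indexed: all `h` with `h + 1 < H`). -/
theorem vail_minimizer_recovers_expert {S A : Type*} [Fintype S] [Fintype A]
    [Nonempty S] [Nonempty A] [DecidableEq S]
    (ρ : S → ℝ) (P : ℕ → S → A → S → ℝ) (r : ℕ → S → A → ℝ)
    (πE πAIL : ℕ → S → A → ℝ) (G : Finset S) (a1 : A)
    (Q : ℕ → S → A → ℝ) (H : ℕ) (hH : 1 ≤ H)
    (hρ : IsInitDist ρ) (hP : IsTransition P) (hr : IsReward r)
    (hE : IsPolicy πE) (hAILpol : IsPolicy πAIL)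
    (hRC : ResetCliff ρ P r G a1)
    (hEa : ∀ h s, πE h s a1 = 1)
    (hQ : AdmissibleEst G a1 Q H)
    (hmin : ∀ π, IsPolicy π → vailLoss ρ P πAIL Q H ≤ vailLoss ρ P π Q H) :
    ∀ h : ℕ, h + 1 < H → ∀ s ∈ G, πAIL h s a1 = 1 := by
  classical
  obtain ⟨hGne, hr1, hr0, hPGsum, hPGpos, hPleave, hPbad, hρpos, hρ0⟩ := hRC
  have hπ0 : ∀ k s a, (0:ℝ) ≤ πAIL k s a := fun k s a => (hAILpol k s).1 a
  have hπsum : ∀ k s, ∑ a : A, πAIL k s a = 1 := fun k s => (hAILpol k s).2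
  have hπle1 : ∀ k s a, πAIL k s a ≤ 1 := by
    intro k s a
    calc πAIL k s a ≤ ∑ a' : A, πAIL k s a' :=
          Finset.single_le_sum (fun a' _ => hπ0 k s a') (Finset.mem_univ a)
      _ = 1 := hπsum k s
  have hP0 : ∀ k s a s', 0 ≤ P k s a s' := fun k s a s' => (hP k s a).1 s'
  have hPsum : ∀ k s a, ∑ s' : S, P k s a s' = 1 := fun k s a => (hP k s a).2
  have hρnn : ∀ s, 0 ≤ ρ s := hρ.1
  -- structural zeros of P
  have hPz1 : ∀ k, ∀ s ∈ G, ∀ s' ∉ G, P k s a1 s' = 0 := by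
    intro k s hs s' hs'
    have hsum : ∑ x ∈ Gᶜ, P k s a1 x = 0 := by
      have h1 := hPGsum k s hs
      have h2 := Finset.sum_add_sum_compl G (P k s a1)
      rw [hPsum] at h2; linarith
    exact (Finset.sum_eq_zero_iff_of_nonneg (fun x _ => hP0 k s a1 x)).1 hsum s'
      (Finset.mem_compl.2 hs')
  have hPz2 : ∀ (k : ℕ) (s : S) (a : A), (s ∉ G ∨ a ≠ a1) → ∀ s' ∈ G, P k s a s' = 0 := by
    intro k s a hcase s' hs'
    have h1 : ∑ x ∈ Gᶜ, P k s a x = 1 := by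
      by_cases hsG : s ∈ G
      · rcases hcase with hs | ha
        · exact absurd hsG hs
        · exact hPleave k s hsG a ha
      · exact hPbad k s hsG a
    have hsum : ∑ x ∈ G, P k s a x = 0 := by
      have h2 := Finset.sum_add_sum_compl G (P k s a)
      rw [hPsum] at h2; linarith
    exact (Finset.sum_eq_zero_iff_of_nonneg (fun x _ => hP0 k s a x)).1 hsum s' hs'
  set d := stateDist ρ P πAIL with hd
  have hdsucc : ∀ k s', d (k+1) s' = ∑ s : S, ∑ a : A, d k s * πAIL k s a * P k s a s' :=
    fun k s' => by rw [hd]; exact stateDist_succ ρ P πAIL k s'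
  have hdnn : ∀ k s, 0 ≤ d k s := stateDist_nonneg hρnn hP0 hπ0
  have hdsum : ∀ k, ∑ s : S, d k s = 1 := stateDist_sum_one hρ.2 hPsum hπsum
  have hdG1 : ∀ k, ∑ s ∈ G, d k s ≤ 1 := by
    intro k
    rw [← hdsum k]
    exact Finset.sum_le_sum_of_subset_of_nonneg (Finset.subset_univ G)
      (fun s _ _ => hdnn k s)
  intro h
  induction h using Nat.strong_induction_on with
  | _ h IH =>
  intro hh1 s₀ hs₀
  by_contra hne
  have hlt : πAIL h s₀ a1 < 1 := lt_of_le_of_ne (hπle1 h s₀ a1) hne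
  have hpre : ∀ k, k < h → ∀ s ∈ G, πAIL k s a1 = 1 := fun k hk s hs =>
    IH k hk (by omega) s hs
  -- positivity of d on G up to step h
  have hdpos : ∀ k, k ≤ h → ∀ s ∈ G, 0 < d k s := by
    intro k
    induction k with
    | zero => exact fun _ s hs => hρpos s hs
    | succ n ihn =>
      intro hkh s' hs'
      obtain ⟨s₁, hs₁⟩ := hGne
      have hd1 : 0 < d n s₁ := ihn (by omega) s₁ hs₁
      have ht1 : 0 < d n s₁ * πAIL n s₁ a1 * P n s₁ a1 s' := by
        rw [hpre n (by omega) s₁ hs₁, mul_one]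
        exact mul_pos hd1 (hPGpos n s₁ hs₁ s' hs')
      have ht2 : d n s₁ * πAIL n s₁ a1 * P n s₁ a1 s'
          ≤ ∑ a : A, d n s₁ * πAIL n s₁ a * P n s₁ a s' :=
        Finset.single_le_sum (fun a _ =>
          mul_nonneg (mul_nonneg (hdnn n s₁) (hπ0 n s₁ a)) (hP0 n s₁ a s')) (Finset.mem_univ a1)
      have ht3 : (∑ a : A, d n s₁ * πAIL n s₁ a * P n s₁ a s')
          ≤ ∑ s : S, ∑ a : A, d n s * πAIL n s a * P n s a s' :=
        Finset.single_le_sum (fun s _ => Finset.sum_nonneg fun a _ =>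
          mul_nonneg (mul_nonneg (hdnn n s) (hπ0 n s a)) (hP0 n s a s')) (Finset.mem_univ s₁)
      rw [hdsucc]; linarith
  -- the modified policy
  set π' : ℕ → S → A → ℝ := fun k s a =>
    if h ≤ k ∧ s ∈ G then (if a = a1 then 1 else 0) else πAIL k s a with hπ'def
  have hπ'G : ∀ k, h ≤ k → ∀ s ∈ G, ∀ a, π' k s a = if a = a1 then 1 else 0 := by
    intro k hk s hs a
    have hc : h ≤ k ∧ s ∈ G := ⟨hk, hs⟩
    simp only [hπ'def, if_pos hc]
  have hπ'eq : ∀ k s a, (k < h ∨ s ∉ G) → π' k s a = πAIL k s a := by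
    intro k s a hc
    have : ¬ (h ≤ k ∧ s ∈ G) := by rcases hc with hc | hc <;> intro hx <;> [omega; exact hc hx.2]
    simp only [hπ'def, if_neg this]
  have hπ'0 : ∀ k s a, (0:ℝ) ≤ π' k s a := by
    intro k s a
    by_cases hc : h ≤ k ∧ s ∈ G
    · rw [hπ'G k hc.1 s hc.2 a]; split <;> norm_num
    · simp only [hπ'def, if_neg hc]; exact hπ0 k s a
  have hπ'sum : ∀ k s, ∑ a : A, π' k s a = 1 := by
    intro k s
    by_cases hc : h ≤ k ∧ s ∈ G
    · simp only [hπ'def, if_pos hc]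
      simp
    · simp only [hπ'def, if_neg hc]
      exact hπsum k s
  have hπ'pol : IsPolicy π' := fun k s => ⟨hπ'0 k s, hπ'sum k s⟩
  set d' := stateDist ρ P π' with hd'
  have hd'succ : ∀ k s', d' (k+1) s' = ∑ s : S, ∑ a : A, d' k s * π' k s a * P k s a s' :=
    fun k s' => by rw [hd']; exact stateDist_succ ρ P π' k s'
  have hd'nn : ∀ k s, 0 ≤ d' k s := stateDist_nonneg hρnn hP0 hπ'0
  have hd'sum : ∀ k, ∑ s : S, d' k s = 1 := stateDist_sum_one hρ.2 hPsum hπ'sum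
  have hd'h : ∀ k, k ≤ h → d' k = d k := by
    intro k hk
    exact (stateDist_congr (fun k' s a hk' => (hπ'eq k' s a (Or.inl (by omega))).symm)).symm
  -- invariant for k ≥ h
  have hinv : ∀ k, h ≤ k → (∀ s ∈ G, d k s ≤ d' k s) ∧ (∀ s ∉ G, d' k s ≤ d k s) := by
    intro k hk
    induction k, hk using Nat.le_induction with
    | base => rw [hd'h h le_rfl]; exact ⟨fun s _ => le_rfl, fun s _ => le_rfl⟩
    | succ k hk ih =>
      constructor
      · intro s' hs'
        rw [hdsucc, hd'succ]
        refine Finset.sum_le_sum fun s _ => Finset.sum_le_sum fun a _ => ?_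
        by_cases hsG : s ∈ G
        · by_cases ha : a = a1
          · rw [ha]
            rw [hπ'G k hk s hsG a1, if_pos rfl, mul_one]
            have h1 : d k s * πAIL k s a1 ≤ d' k s :=
              le_trans (mul_le_of_le_one_right (hdnn k s) (hπle1 k s a1)) (ih.1 s hsG)
            exact mul_le_mul_of_nonneg_right h1 (hP0 k s a1 s')
          · rw [hPz2 k s a (Or.inr ha) s' hs', mul_zero, mul_zero]
        · rw [hPz2 k s a (Or.inl hsG) s' hs', mul_zero, mul_zero]
      · intro s' hs'
        rw [hd'succ, hdsucc]
        refine Finset.sum_le_sum fun s _ => Finset.sum_le_sum fun a _ => ?_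
        by_cases hsG : s ∈ G
        · by_cases ha : a = a1
          · rw [ha]
            rw [hPz1 k s hsG s' hs', mul_zero, mul_zero]
          · rw [hπ'G k hk s hsG a, if_neg ha, mul_zero, zero_mul]
            exact mul_nonneg (mul_nonneg (hdnn k s) (hπ0 k s a)) (hP0 k s a s')
        · rw [hπ'eq k s a (Or.inr hsG)]
          exact mul_le_mul_of_nonneg_right
            (mul_le_mul_of_nonneg_right (ih.2 s hsG) (hπ0 k s a)) (hP0 k s a s')
  -- per-step loss comparison for k ≥ h
  have step_decomp : ∀ k, h ≤ k → k < H →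
      (∑ s : S, ∑ a : A, |d k s * πAIL k s a - Q k s a|)
        = (∑ s ∈ G, |d k s * πAIL k s a1 - Q k s a1|) + (1 - ∑ s ∈ G, d k s * πAIL k s a1) ∧
      (∑ s : S, ∑ a : A, |d' k s * π' k s a - Q k s a|)
        = (∑ s ∈ G, |d' k s - Q k s a1|) + (1 - ∑ s ∈ G, d' k s) := by
    intro k hk hkH
    obtain ⟨hQnn, hQ0, hQsum⟩ := hQ k hkH
    have hdec := loss_decomp G a1 (d k) (hdnn k) (πAIL k) (hπ0 k) (hπsum k) (Q k) (hQ0)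
    have hdec' := loss_decomp G a1 (d' k) (hd'nn k) (π' k) (hπ'0 k) (hπ'sum k) (Q k) (hQ0)
    have hcompl : ∑ s ∈ Gᶜ, d k s = 1 - ∑ s ∈ G, d k s := by
      have := Finset.sum_add_sum_compl G (d k); rw [hdsum k] at this; linarith
    have hcompl' : ∑ s ∈ Gᶜ, d' k s = 1 - ∑ s ∈ G, d' k s := by
      have := Finset.sum_add_sum_compl G (d' k); rw [hd'sum k] at this; linarith
    have hsub : ∑ s ∈ G, (d k s - d k s * πAIL k s a1)
        = (∑ s ∈ G, d k s) - ∑ s ∈ G, d k s * πAIL k s a1 := Finset.sum_sub_distrib _ _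
    constructor
    · rw [hdec, hcompl, hsub]; ring
    · have habs : ∀ s ∈ G, |d' k s * π' k s a1 - Q k s a1| = |d' k s - Q k s a1| := by
        intro s hs; rw [hπ'G k hk s hs a1, if_pos rfl, mul_one]
      have hzero : ∑ s ∈ G, (d' k s - d' k s * π' k s a1) = 0 :=
        Finset.sum_eq_zero fun s hs => by rw [hπ'G k hk s hs a1, if_pos rfl, mul_one, sub_self]
      rw [hdec', hcompl', hzero, Finset.sum_congr rfl habs]; ring
  have hptle : ∀ k, h ≤ k → ∀ s ∈ G, d k s * πAIL k s a1 ≤ d' k s := fun k hk s hs =>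
    le_trans (mul_le_of_le_one_right (hdnn k s) (hπle1 k s a1)) ((hinv k hk).1 s hs)
  have step_le : ∀ k, h ≤ k → k < H →
      (∑ s : S, ∑ a : A, |d' k s * π' k s a - Q k s a|)
        ≤ ∑ s : S, ∑ a : A, |d k s * πAIL k s a - Q k s a| := by
    intro k hk hkH
    obtain ⟨e1, e2⟩ := step_decomp k hk hkH
    rw [e1, e2]
    have hA : ∑ s ∈ G, |d' k s - Q k s a1|
        ≤ ∑ s ∈ G, (|d k s * πAIL k s a1 - Q k s a1| + (d' k s - d k s * πAIL k s a1)) :=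
      Finset.sum_le_sum fun s hs => abs_le_aux (hptle k hk s hs)
    rw [Finset.sum_add_distrib, Finset.sum_sub_distrib] at hA
    linarith
  -- strictness at step h+1
  have hstrict : (∑ s : S, ∑ a : A, |d' (h+1) s * π' (h+1) s a - Q (h+1) s a|)
      < ∑ s : S, ∑ a : A, |d (h+1) s * πAIL (h+1) s a - Q (h+1) s a| := by
    obtain ⟨hQnn, hQ0, hQsum⟩ := hQ (h+1) hh1
    -- g_{h+1} = x_h ≤ 1 - c < 1
    have hxh : ∑ s ∈ G, d (h+1) s ≤ ∑ s ∈ G, d h s * πAIL h s a1 := by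
      have hg : ∑ s' ∈ G, d (h+1) s'
          = ∑ s : S, ∑ a : A, d h s * πAIL h s a * (∑ s' ∈ G, P h s a s') := by
        have : ∀ s' ∈ G, d (h+1) s' = ∑ s : S, ∑ a : A, d h s * πAIL h s a * P h s a s' :=
          fun s' _ => hdsucc h s'
        rw [Finset.sum_congr rfl this, Finset.sum_comm]
        refine Finset.sum_congr rfl fun s _ => ?_
        rw [Finset.sum_comm]
        exact Finset.sum_congr rfl fun a _ => (Finset.mul_sum _ _ _).symm
      rw [hg]
      have hz : ∀ s : S, s ∉ G → (∑ a : A, d h s * πAIL h s a * (∑ s' ∈ G, P h s a s')) = 0 :=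
        fun s hs => Finset.sum_eq_zero fun a _ => by
          rw [Finset.sum_eq_zero (fun s' hs' => hPz2 h s a (Or.inl hs) s' hs'), mul_zero]
      rw [← Finset.sum_subset (Finset.subset_univ G) (fun s _ hs => hz s hs)]
      refine Finset.sum_le_sum fun s hs => ?_
      have hin : ∀ a : A, a ≠ a1 → d h s * πAIL h s a * (∑ s' ∈ G, P h s a s') = 0 :=
        fun a ha => by
          rw [Finset.sum_eq_zero (fun s' hs' => hPz2 h s a (Or.inr ha) s' hs'), mul_zero]
      rw [Finset.sum_eq_single a1 (fun a _ ha => hin a ha) (fun ha => absurd (Finset.mem_univ a1) ha),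
        hPGsum h s hs, mul_one]
    have hc : 0 < d h s₀ * (1 - πAIL h s₀ a1) :=
      mul_pos (hdpos h le_rfl s₀ hs₀) (by linarith)
    have hxlt : ∑ s ∈ G, d h s * πAIL h s a1 < 1 := by
      have h1 : ∑ s ∈ G, d h s * πAIL h s a1 = (∑ s ∈ G, d h s) - ∑ s ∈ G, d h s * (1 - πAIL h s a1) := by
        rw [← Finset.sum_sub_distrib]; exact Finset.sum_congr rfl fun s _ => by ring
      have h2 : d h s₀ * (1 - πAIL h s₀ a1) ≤ ∑ s ∈ G, d h s * (1 - πAIL h s a1) :=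
        Finset.single_le_sum (f := fun s => d h s * (1 - πAIL h s a1))
          (fun s _ => mul_nonneg (hdnn h s) (by linarith [hπle1 h s a1])) hs₀
      have := hdG1 h
      linarith
    have hxk1 : ∑ s ∈ G, d (h+1) s * πAIL (h+1) s a1 < 1 := by
      have : ∑ s ∈ G, d (h+1) s * πAIL (h+1) s a1 ≤ ∑ s ∈ G, d (h+1) s :=
        Finset.sum_le_sum fun s _ => mul_le_of_le_one_right (hdnn (h+1) s) (hπle1 (h+1) s a1)
      linarith
    -- exists sb ∈ G with Q > d π
    have hex : ∃ sb ∈ G, d (h+1) sb * πAIL (h+1) sb a1 < Q (h+1) sb a1 := by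
      by_contra hno
      push_neg at hno
      have : (1:ℝ) ≤ ∑ s ∈ G, d (h+1) s * πAIL (h+1) s a1 := by
        rw [← hQsum]; exact Finset.sum_le_sum hno
      linarith
    obtain ⟨sb, hsbG, hsbQ⟩ := hex
    -- d (h+1) sb < d' (h+1) sb
    have hdlt : d (h+1) sb < d' (h+1) sb := by
      rw [hdsucc, hd'succ, hd'h h le_rfl]
      refine Finset.sum_lt_sum (fun s _ => Finset.sum_le_sum fun a _ => ?_)
        ⟨s₀, Finset.mem_univ s₀, ?_⟩
      · by_cases hsG : s ∈ G
        · by_cases ha : a = a1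
          · rw [ha]
            rw [hπ'G h le_rfl s hsG a1, if_pos rfl, mul_one]
            exact mul_le_mul_of_nonneg_right
              (mul_le_of_le_one_right (hdnn h s) (hπle1 h s a1)) (hP0 h s a1 sb)
          · rw [hPz2 h s a (Or.inr ha) sb hsbG, mul_zero, mul_zero]
        · rw [hπ'eq h s a (Or.inr hsG)]
      · refine Finset.sum_lt_sum (fun a _ => ?_) ⟨a1, Finset.mem_univ a1, ?_⟩
        · by_cases ha : a = a1
          · rw [ha]
            rw [hπ'G h le_rfl s₀ hs₀ a1, if_pos rfl, mul_one]
            exact mul_le_mul_of_nonneg_right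
              (mul_le_of_le_one_right (hdnn h s₀) (hπle1 h s₀ a1)) (hP0 h s₀ a1 sb)
          · rw [hPz2 h s₀ a (Or.inr ha) sb hsbG, mul_zero, mul_zero]
        · rw [hπ'G h le_rfl s₀ hs₀ a1, if_pos rfl, mul_one]
          exact mul_lt_mul_of_pos_right
            (by nlinarith [hdpos h le_rfl s₀ hs₀]) (hPGpos h s₀ hs₀ sb hsbG)
    have hptlt : d (h+1) sb * πAIL (h+1) sb a1 < d' (h+1) sb :=
      lt_of_le_of_lt (mul_le_of_le_one_right (hdnn (h+1) sb) (hπle1 (h+1) sb a1)) hdlt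
    obtain ⟨e1, e2⟩ := step_decomp (h+1) (by omega) hh1
    rw [e1, e2]
    have hA : ∑ s ∈ G, |d' (h+1) s - Q (h+1) s a1|
        < ∑ s ∈ G, (|d (h+1) s * πAIL (h+1) s a1 - Q (h+1) s a1|
            + (d' (h+1) s - d (h+1) s * πAIL (h+1) s a1)) := by
      refine Finset.sum_lt_sum (fun s hs => abs_le_aux (hptle (h+1) (by omega) s hs))
        ⟨sb, hsbG, abs_lt_aux hsbQ hptlt⟩
    rw [Finset.sum_add_distrib, Finset.sum_sub_distrib] at hA
    linarith
  -- conclude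
  have hloss : vailLoss ρ P π' Q H < vailLoss ρ P πAIL Q H := by
    unfold vailLoss saDist
    rw [← hd, ← hd']
    refine Finset.sum_lt_sum (fun k hk => ?_) ⟨h+1, Finset.mem_range.2 hh1, hstrict⟩
    rw [Finset.mem_range] at hk
    by_cases hkh : k < h
    · refine le_of_eq (Finset.sum_congr rfl fun s _ => Finset.sum_congr rfl fun a _ => ?_)
      rw [hd'h k (le_of_lt hkh), hπ'eq k s a (Or.inl hkh)]
    · exact step_le k (by omega) hk
  exact absurd (hmin π' hπ'pol) (not_le.mpr hloss)
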